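/- Let P = {x_i, x_{i+1}, …, x_{i'}} be a nonempty set of points in ℝ² with x_j ≺ x_k for all j < k. Then the continuous 1-center cost of P satisfies min_{y ∈ ℝ²} max_{x ∈ P} ‖x − y‖ = (1/2)·‖x_i − x_{i'}‖, i.e., the radius of the minimum enclosing ball of P equals half the distance between its two extreme points. -/

import Mathlib

noncomputable section

abbrev Pt : Type := EuclideanSpace ℝ (Fin 2)

/-- Strict Pareto dominance on ℝ²: `y ≺ z` iff `y¹ < z¹` and `y² > z²`. -/
def prec (y z : Pt) : Prop := y 0 < z 0 ∧ z 1 < y 1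

/-- For a nonempty interval cluster `P = {x_i, …, x_{i'}}` of a 2d Pareto front,
the continuous 1-center cost `min_{y ∈ ℝ²} max_{x ∈ P} ‖x − y‖` equals
`(1/2)·‖x_i − x_{i'}‖`. -/
theorem continuous_one_center_cost (N : ℕ) (x : ℕ → Pt)
    (mono : ∀ i j : ℕ, i < j → j ≤ N → prec (x i) (x j))
    (i i' : ℕ) (hii : i ≤ i') (hN : i' ≤ N) :
    (⨅ y : Pt, (Finset.Icc i i').sup' (Finset.nonempty_Icc.mpr hii)
        (fun j => dist (x j) y))
      = (1 / 2) * dist (x i) (x i') := by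
  set c : ℝ := (1 / 2) * dist (x i) (x i') with hc
  set m : Pt := (2 : ℝ)⁻¹ • (x i + x i') with hm
  -- key: every point of the cluster has nonpositive inner product of the two legs
  have hinner : ∀ j, i ≤ j → j ≤ i' →
      inner ℝ (x i - x j) (x i' - x j) ≤ (0 : ℝ) := by
    intro j hij hji'
    rcases eq_or_lt_of_le hij with h | h
    · simp [← h]
    rcases eq_or_lt_of_le hji' with h' | h'
    · simp [h']
    have h1 := mono i j h (le_trans hji' hN)
    have h2 := mono j i' h' hN
    obtain ⟨h1a, h1b⟩ := h1
    obtain ⟨h2a, h2b⟩ := h2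
    rw [PiLp.inner_apply]
    rw [Fin.sum_univ_two]
    simp only [PiLp.sub_apply, RCLike.inner_apply, conj_trivial]
    nlinarith
  -- key upper bound: distance to the midpoint
  have key : ∀ j, i ≤ j → j ≤ i' → dist (x j) m ≤ c := by
    intro j hij hji'
    set a : Pt := x i - x j with ha
    set b : Pt := x i' - x j with hb
    have hxm : x j - m = (-(2⁻¹) : ℝ) • (a + b) := by
      rw [hm, ha, hb]; module
    have hnorm : dist (x j) m = 2⁻¹ * ‖a + b‖ := by
      rw [dist_eq_norm, hxm, norm_smul]
      norm_num
    have hab : a - b = x i - x i' := by rw [ha, hb]; module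
    have hdist : dist (x i) (x i') = ‖a - b‖ := by rw [hab, dist_eq_norm]
    have hip := hinner j hij hji'
    have hip' : inner ℝ a b ≤ (0 : ℝ) := by rw [ha, hb]; exact hip
    have hsq : ‖a + b‖ ^ 2 ≤ ‖a - b‖ ^ 2 := by
      have e1 := norm_add_sq_real a b
      have e2 := norm_sub_sq_real a b
      linarith
    have hle : ‖a + b‖ ≤ ‖a - b‖ := by
      nlinarith [norm_nonneg (a + b), norm_nonneg (a - b)]
    rw [hnorm, hc, hdist]
    linarith
  -- lower bound: any center is far from one of the extreme points
  have hlow : ∀ y : Pt, c ≤ (Finset.Icc i i').sup' (Finset.nonempty_Icc.mpr hii)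
      (fun j => dist (x j) y) := by
    intro y
    have hi : i ∈ Finset.Icc i i' := Finset.mem_Icc.mpr ⟨le_refl i, hii⟩
    have hi' : i' ∈ Finset.Icc i i' := Finset.mem_Icc.mpr ⟨hii, le_refl i'⟩
    have h1 := Finset.le_sup' (fun j => dist (x j) y) hi
    have h2 := Finset.le_sup' (fun j => dist (x j) y) hi'
    have htri : dist (x i) (x i') ≤ dist (x i) y + dist (x i') y :=
      dist_triangle_right _ _ _
    rw [hc]; linarith
  have hbdd : BddBelow (Set.range fun y : Pt =>
      (Finset.Icc i i').sup' (Finset.nonempty_Icc.mpr hii) (fun j => dist (x j) y)) := by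
    refine ⟨c, ?_⟩
    rintro _ ⟨y, rfl⟩
    exact hlow y
  apply le_antisymm
  · refine le_trans (ciInf_le hbdd m) ?_
    apply Finset.sup'_le
    intro j hj
    obtain ⟨hij, hji'⟩ := Finset.mem_Icc.mp hj
    exact key j hij hji'
  · exact le_ciInf hlow
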